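/- The octahedron graph K_{2,2,2} admits no outerplanar storyplan: for every vertex ordering τ, at some step the visible induced subgraph is not outerplanar. In particular, for the first vertex v that disappears, the entire closed neighborhood N[v], inducing a wheel W_4, is visible at some step. -/

import Mathlib

/-- `H` is a minor of `G`: disjoint connected branch sets, one per vertex of `H`,
with an edge of `G` between branch sets of adjacent vertices of `H`. -/
def SimpleGraph.IsMinorOf {W V : Type*} (H : SimpleGraph W) (G : SimpleGraph V) : Prop :=
  ∃ f : W → Set V,
    (∀ w, (G.induce (f w)).Connected) ∧
    (∀ w₁ w₂, w₁ ≠ w₂ → Disjoint (f w₁) (f w₂)) ∧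
    (∀ w₁ w₂, H.Adj w₁ w₂ → ∃ a ∈ f w₁, ∃ b ∈ f w₂, G.Adj a b)

/-- Planarity via Wagner's theorem: no `K₅` minor and no `K₃,₃` minor. -/
def SimpleGraph.IsPlanar {V : Type*} (G : SimpleGraph V) : Prop :=
  ¬ (completeGraph (Fin 5)).IsMinorOf G ∧
  ¬ (completeBipartiteGraph (Fin 3) (Fin 3)).IsMinorOf G

/-- Outerplanarity: no `K₄` minor and no `K₂,₃` minor. -/
def SimpleGraph.IsOuterplanar {V : Type*} (G : SimpleGraph V) : Prop :=
  ¬ (completeGraph (Fin 4)).IsMinorOf G ∧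
  ¬ (completeBipartiteGraph (Fin 2) (Fin 3)).IsMinorOf G

/-- Vertex `v` is visible at step `i`: `τ v ≤ i ≤ max_{u ∈ N[v]} τ u`. -/
def visibleAt {V : Type*} {n : ℕ} (G : SimpleGraph V) (τ : V ≃ Fin n) (v : V) (i : Fin n) :
    Prop :=
  τ v ≤ i ∧ ∃ u, (u = v ∨ G.Adj v u) ∧ i ≤ τ u

/-- The `i`-th frame: the subgraph induced by the vertices visible at step `i`. -/
def frame {V : Type*} {n : ℕ} (G : SimpleGraph V) (τ : V ≃ Fin n) (i : Fin n) :
    SimpleGraph {v : V // visibleAt G τ v i} :=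
  G.induce {v | visibleAt G τ v i}

def IsForestStoryplan {V : Type*} {n : ℕ} (G : SimpleGraph V) (τ : V ≃ Fin n) : Prop :=
  ∀ i : Fin n, (frame G τ i).IsAcyclic

def IsOuterplanarStoryplan {V : Type*} {n : ℕ} (G : SimpleGraph V) (τ : V ≃ Fin n) : Prop :=
  ∀ i : Fin n, (frame G τ i).IsOuterplanar

def IsPlanarStoryplan {V : Type*} {n : ℕ} (G : SimpleGraph V) (τ : V ≃ Fin n) : Prop :=
  ∀ i : Fin n, (frame G τ i).IsPlanar
/-- The wheel graph `W_k`: a cycle on `k` vertices (`some i`) plus a hub (`none`)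
adjacent to all of them. -/
def wheelGraph (k : ℕ) : SimpleGraph (Option (ZMod k)) :=
  SimpleGraph.fromRel (fun a b =>
    a = none ∨ ∃ i : ZMod k, a = some i ∧ b = some (i + 1))
/-- The octahedron graph `K_{2,2,2}`. -/
def octahedron : SimpleGraph (Σ _ : Fin 3, Fin 2) :=
  SimpleGraph.completeMultipartiteGraph (fun _ : Fin 3 => Fin 2)

-- Auxiliary material

instance : DecidableRel octahedron.Adj := fun a b =>
  decidable_of_iff (a.1 ≠ b.1) Iff.rfl

instance : DecidableRel (wheelGraph 4).Adj := fun a b =>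
  decidable_of_iff (a ≠ b ∧ ((a = none ∨ ∃ i : ZMod 4, a = some i ∧ b = some (i + 1)) ∨
    (b = none ∨ ∃ i : ZMod 4, b = some i ∧ a = some (i + 1)))) Iff.rfl

open Fin.NatCast in
/-- The canonical embedding of the wheel `W₄` into the octahedron with hub `⟨j, b⟩`. -/
def f0 (j : Fin 3) (b : Fin 2) : Option (ZMod 4) → (Σ _ : Fin 3, Fin 2)
  | none => ⟨j, b⟩
  | some k => ⟨j + (k.val % 2 : ℕ) + 1, ⟨k.val / 2, by have := ZMod.val_lt k; omega⟩⟩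

lemma f0_adj : ∀ (j : Fin 3) (b : Fin 2) (a c : Option (ZMod 4)),
    octahedron.Adj (f0 j b a) (f0 j b c) ↔ (wheelGraph 4).Adj a c := by decide

lemma f0_inj : ∀ (j : Fin 3) (b : Fin 2) (a c : Option (ZMod 4)),
    f0 j b a = f0 j b c → a = c := by decide

lemma f0_mem : ∀ (j : Fin 3) (b : Fin 2) (a : Option (ZMod 4)),
    f0 j b a = ⟨j, b⟩ ∨ octahedron.Adj ⟨j, b⟩ (f0 j b a) := by decide

lemma f0_surj : ∀ (j : Fin 3) (b : Fin 2) (u : (Σ _ : Fin 3, Fin 2)),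
    (u = ⟨j, b⟩ ∨ octahedron.Adj ⟨j, b⟩ u) → ∃ a, f0 j b a = u := by decide

lemma conn_single {V : Type*} (G : SimpleGraph V) (x : V) :
    (G.induce {x}).Connected := by
  refine (SimpleGraph.connected_iff _).mpr ⟨fun a b => ?_, ⟨⟨x, rfl⟩⟩⟩
  have : a = b := Subtype.ext (a.2.trans b.2.symm)
  exact this ▸ SimpleGraph.Reachable.refl a

lemma conn_pair {V : Type*} (G : SimpleGraph V) {x y : V} (h : G.Adj x y) :
    (G.induce {x, y}).Connected := by
  have key : ∀ a : ({x, y} : Set V), (G.induce {x, y}).Reachable ⟨x, Or.inl rfl⟩ a := by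
    rintro ⟨a, (rfl | rfl)⟩
    · exact SimpleGraph.Reachable.refl _
    · exact SimpleGraph.Adj.reachable (by exact h)
  exact (SimpleGraph.connected_iff _).mpr
    ⟨fun a b => (key a).symm.trans (key b), ⟨⟨x, Or.inl rfl⟩⟩⟩

lemma vis_exists (τ : (Σ _ : Fin 3, Fin 2) ≃ Fin 6) (v : (Σ _ : Fin 3, Fin 2))
    (hmin : ∀ u w, (w = v ∨ octahedron.Adj v w) →
      ∃ w', (w' = u ∨ octahedron.Adj u w') ∧ τ w ≤ τ w') :
    ∃ i : Fin 6, ∀ u, (u = v ∨ octahedron.Adj v u) → visibleAt octahedron τ u i := by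
  obtain ⟨w, hw, hwmax⟩ := Finset.exists_max_image
    (Finset.univ.filter fun u => u = v ∨ octahedron.Adj v u) (fun u => τ u)
    ⟨v, by simp⟩
  refine ⟨τ w, fun u hu => ⟨hwmax u (by simpa using hu), ?_⟩⟩
  obtain ⟨w', hw', hle⟩ := hmin u w (by simpa using hw)
  exact ⟨w', hw', hle⟩

lemma wheel_iso (j : Fin 3) (b : Fin 2) :
    Nonempty ((octahedron.induce
      {u | u = (⟨j, b⟩ : Σ _ : Fin 3, Fin 2) ∨ octahedron.Adj ⟨j, b⟩ u}) ≃g wheelGraph 4) := by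
  let g : Option (ZMod 4) →
      {u // u ∈ {u | u = (⟨j, b⟩ : Σ _ : Fin 3, Fin 2) ∨ octahedron.Adj ⟨j, b⟩ u}} :=
    fun a => ⟨f0 j b a, f0_mem j b a⟩
  have hinj : Function.Injective g := fun a c hac =>
    f0_inj j b a c (congrArg Subtype.val hac)
  have hsurj : Function.Surjective g := by
    rintro ⟨u, hu⟩
    obtain ⟨a, ha⟩ := f0_surj j b u hu
    exact ⟨a, Subtype.ext ha⟩
  exact ⟨(RelIso.mk (Equiv.ofBijective g ⟨hinj, hsurj⟩)
    (fun {a c} => f0_adj j b a c)).symm⟩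

/-- The octahedron admits no outerplanar storyplan: for every vertex order some
frame is not outerplanar; in particular, for any vertex `v` that disappears
first, the whole closed neighborhood `N[v]`, which induces a wheel `W₄`, is
visible at some step. -/
theorem stmt_19 (τ : (Σ _ : Fin 3, Fin 2) ≃ Fin 6) :
    (∃ i : Fin 6, ¬ (frame octahedron τ i).IsOuterplanar) ∧
    ∀ v : (Σ _ : Fin 3, Fin 2),
      -- `v` disappears no later than any other vertex:
      (∀ u w, (w = v ∨ octahedron.Adj v w) →
        ∃ w', (w' = u ∨ octahedron.Adj u w') ∧ τ w ≤ τ w') →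
      (∃ i : Fin 6, ∀ u, (u = v ∨ octahedron.Adj v u) →
        visibleAt octahedron τ u i) ∧
      Nonempty
        ((octahedron.induce {u | u = v ∨ octahedron.Adj v u}) ≃g wheelGraph 4) := by
  constructor
  · -- some frame is not outerplanar
    have hne0 : ∀ v : (Σ _ : Fin 3, Fin 2),
        ((Finset.univ.filter fun u => u = v ∨ octahedron.Adj v u).image fun u => τ u).Nonempty :=
      fun v => ⟨τ v, Finset.mem_image_of_mem _ (by simp)⟩
    set D : (Σ _ : Fin 3, Fin 2) → Fin 6 := fun v =>
      ((Finset.univ.filter fun u => u = v ∨ octahedron.Adj v u).image fun u => τ u).max'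
        (hne0 v) with hD
    obtain ⟨v, -, hvmin⟩ := Finset.exists_min_image Finset.univ D ⟨⟨0, 0⟩, Finset.mem_univ _⟩
    have hmin : ∀ u w, (w = v ∨ octahedron.Adj v w) →
        ∃ w', (w' = u ∨ octahedron.Adj u w') ∧ τ w ≤ τ w' := by
      intro u w hw
      have h1 : τ w ≤ D v := Finset.le_max' _ _ (Finset.mem_image_of_mem _ (by simpa using hw))
      have h2 : D v ≤ D u := hvmin u (Finset.mem_univ u)
      obtain ⟨w', hw', hDw'⟩ := Finset.mem_image.mp (Finset.max'_mem _ (hne0 u))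
      exact ⟨w', by simpa using hw', hDw' ▸ le_trans h1 h2⟩
    obtain ⟨i, h⟩ := vis_exists τ v hmin
    obtain ⟨j, b⟩ := v
    refine ⟨i, fun hop => hop.1 ?_⟩
    let e : Option (ZMod 4) → {u // visibleAt octahedron τ u i} :=
      fun a => ⟨f0 j b a, h _ (f0_mem j b a)⟩
    have einj : Function.Injective e := fun a c hac =>
      f0_inj j b a c (congrArg Subtype.val hac)
    have A : ∀ a c : Option (ZMod 4), (wheelGraph 4).Adj a c →
        (frame octahedron τ i).Adj (e a) (e c) :=
      fun a c hac => (f0_adj j b a c).mpr hac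
    have d1 : ∀ a c : Option (ZMod 4), a ≠ c → Disjoint ({e a} : Set _) {e c} :=
      fun a c hne => Set.disjoint_singleton.mpr fun hh => hne (einj hh)
    have d2 : ∀ a c c' : Option (ZMod 4), a ≠ c → a ≠ c' →
        Disjoint ({e a} : Set _) {e c, e c'} := fun a c c' hc hc' =>
      Set.disjoint_singleton_left.mpr fun hm =>
        (Set.mem_insert_iff.mp hm).elim (fun hh => hc (einj hh)) (fun hh => hc' (einj hh))
    refine ⟨fun w => if w = 0 then {e none} else if w = 1 then {e (some 0)}
      else if w = 2 then {e (some 1)} else {e (some 2), e (some 3)}, ?_, ?_, ?_⟩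
    · intro w
      fin_cases w
      · exact conn_single _ (e none)
      · exact conn_single _ (e (some 0))
      · exact conn_single _ (e (some 1))
      · exact conn_pair _ (A (some 2) (some 3) (by decide))
    · intro w₁ w₂ hw
      fin_cases w₁ <;> fin_cases w₂ <;>
        first
          | exact absurd rfl hw
          | exact d1 _ _ (by decide)
          | exact d2 _ _ _ (by decide) (by decide)
          | exact (d2 _ _ _ (by decide) (by decide)).symm
    · intro w₁ w₂ hw
      have hw' : w₁ ≠ w₂ := hw
      fin_cases w₁ <;> fin_cases w₂
      · exact absurd rfl hw'
      · exact ⟨e none, rfl, e (some 0), rfl, A _ _ (by decide)⟩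
      · exact ⟨e none, rfl, e (some 1), rfl, A _ _ (by decide)⟩
      · exact ⟨e none, rfl, e (some 2), Or.inl rfl, A _ _ (by decide)⟩
      · exact ⟨e (some 0), rfl, e none, rfl, A _ _ (by decide)⟩
      · exact absurd rfl hw'
      · exact ⟨e (some 0), rfl, e (some 1), rfl, A _ _ (by decide)⟩
      · exact ⟨e (some 0), rfl, e (some 3), Or.inr rfl, A _ _ (by decide)⟩
      · exact ⟨e (some 1), rfl, e none, rfl, A _ _ (by decide)⟩
      · exact ⟨e (some 1), rfl, e (some 0), rfl, A _ _ (by decide)⟩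
      · exact absurd rfl hw'
      · exact ⟨e (some 1), rfl, e (some 2), Or.inl rfl, A _ _ (by decide)⟩
      · exact ⟨e (some 2), Or.inl rfl, e none, rfl, A _ _ (by decide)⟩
      · exact ⟨e (some 3), Or.inr rfl, e (some 0), rfl, A _ _ (by decide)⟩
      · exact ⟨e (some 2), Or.inl rfl, e (some 1), rfl, A _ _ (by decide)⟩
      · exact absurd rfl hw'
  · intro v hmin
    refine ⟨vis_exists τ v hmin, ?_⟩
    obtain ⟨j, b⟩ := v
    exact wheel_iso j b
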